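/- arXiv:1703.03214 — 2 statements merged into one kernel-verified Lean document; each statement's English description precedes it below -/
import Mathlib

section
/- Consider N users and a finite horizon of T time slots. In each slot the scheduler picks one user a, and with probability β_a that user's received-packet count increases by one (otherwise the state is unchanged), independently across slots. Each user i must receive p_i(T) packets by the end of slot T-1 (a single common terminal deadline check). Then for any scheduling policy, the probability that all users meet their demands depends only on the multiset of total remaining demands and the channel probabilities, and the earliest-deadline-first (here: any work-conserving) policy that serves users with unmet demand achieves the maximum success probability. -/
/-- Optimal value function of the finite-horizon scheduling MDP, indexed by the number of
remaining slots: choosing user `a` increments coordinate `a` with probability `β a`,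
otherwise the state is unchanged. -/
noncomputable def uStar {N : ℕ} (β : Fin N → ℝ) (r : (Fin N → ℕ) → ℝ) :
    ℕ → (Fin N → ℕ) → ℝ
  | 0, s => r s
  | k + 1, s =>
      ⨆ a : Fin N,
        (β a * uStar β r k (Function.update s a (s a + 1)) + (1 - β a) * uStar β r k s)

/-- Value function of a (Markov, deterministic) policy `d`, indexed by remaining slots. -/
noncomputable def uPol {N : ℕ} (β : Fin N → ℝ) (r : (Fin N → ℕ) → ℝ)
    (d : ℕ → (Fin N → ℕ) → Fin N) : ℕ → (Fin N → ℕ) → ℝ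
  | 0, s => r s
  | k + 1, s =>
      β (d k s) * uPol β r d k (Function.update s (d k s) (s (d k s) + 1)) +
        (1 - β (d k s)) * uPol β r d k s

section Aux

variable {N : ℕ}

/-- terminal reward -/
@[reducible] noncomputable def rwd (p : Fin N → ℕ) : (Fin N → ℕ) → ℝ :=
  fun z => if ∀ i, p i ≤ z i then (1 : ℝ) else 0

lemma update_le_update {s s' : Fin N → ℕ} (h : ∀ i, s i ≤ s' i) (a : Fin N) :
    ∀ i, Function.update s a (s a + 1) i ≤ Function.update s' a (s' a + 1) i := by
  intro i
  rcases eq_or_ne i a with rfl | hia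
  · simp [h i]
  · simpa [Function.update_of_ne hia] using h i

lemma uStar_mono {β : Fin N → ℝ} (hβ : ∀ a, 0 < β a ∧ β a ≤ 1) (p : Fin N → ℕ) :
    ∀ (k : ℕ) (s s' : Fin N → ℕ), (∀ i, s i ≤ s' i) →
      uStar β (rwd p) k s ≤ uStar β (rwd p) k s'
  | 0, s, s', h => by
      simp only [uStar, rwd]
      split_ifs with h1 h2
      · exact le_rfl
      · exact absurd (fun i => (h1 i).trans (h i)) h2
      · norm_num
      · exact le_rfl
  | k + 1, s, s', h => by
      simp only [uStar]
      apply ciSup_mono ((Set.finite_range _).bddAbove)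
      intro a
      have h1 := uStar_mono hβ p k _ _ (update_le_update h a)
      have h2 := uStar_mono hβ p k s s' h
      have hb := hβ a
      nlinarith [h1, h2, hb.1, hb.2]

/-- the value depends on `s` only through `min s p` -/
lemma uStar_clip {β : Fin N → ℝ} (p : Fin N → ℕ) :
    ∀ (k : ℕ) (s s' : Fin N → ℕ), (∀ i, min (s i) (p i) = min (s' i) (p i)) →
      uStar β (rwd p) k s = uStar β (rwd p) k s'
  | 0, s, s', h => by
      simp only [uStar, rwd]
      have : (∀ i, p i ≤ s i) ↔ (∀ i, p i ≤ s' i) := by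
        constructor <;> intro hh i <;> have := h i <;> have := hh i <;> omega
      rw [if_congr this rfl rfl]
  | k + 1, s, s', h => by
      simp only [uStar]
      apply iSup_congr
      intro a
      have hu : ∀ i, min (Function.update s a (s a + 1) i) (p i)
          = min (Function.update s' a (s' a + 1) i) (p i) := by
        intro i
        rcases eq_or_ne i a with rfl | hia
        · have := h i; simp only [Function.update_self]; omega
        · simpa [Function.update_of_ne hia] using h i
      rw [uStar_clip p k _ _ hu, uStar_clip p k s s' h]

lemma uStar_allMet {β : Fin N → ℝ} [NeZero N] (p : Fin N → ℕ) :
    ∀ (k : ℕ) (s : Fin N → ℕ), (∀ i, p i ≤ s i) → uStar β (rwd p) k s = 1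
  | 0, s, h => by simp only [uStar, rwd, if_pos h]
  | k + 1, s, h => by
      haveI : Nonempty (Fin N) := ⟨⟨0, Nat.pos_of_ne_zero (NeZero.ne N)⟩⟩
      simp only [uStar]
      have : ∀ a : Fin N, β a * uStar β (rwd p) k (Function.update s a (s a + 1))
          + (1 - β a) * uStar β (rwd p) k s = 1 := by
        intro a
        have h1 : ∀ i, p i ≤ Function.update s a (s a + 1) i := by
          intro i
          rcases eq_or_ne i a with rfl | hia
          · simp only [Function.update_self]; exact Nat.le_succ_of_le (h _)
          · simpa [Function.update_of_ne hia] using h i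
        rw [uStar_allMet p k _ h1, uStar_allMet p k s h]; ring
      calc (⨆ a : Fin N, (β a * uStar β (rwd p) k (Function.update s a (s a + 1))
            + (1 - β a) * uStar β (rwd p) k s)) = ⨆ _ : Fin N, (1 : ℝ) :=
              iSup_congr this
        _ = 1 := ciSup_const

lemma uPol_allMet {β : Fin N → ℝ} (p : Fin N → ℕ) (d : ℕ → (Fin N → ℕ) → Fin N) :
    ∀ (k : ℕ) (s : Fin N → ℕ), (∀ i, p i ≤ s i) → uPol β (rwd p) d k s = 1
  | 0, s, h => by simp only [uPol, rwd, if_pos h]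
  | k + 1, s, h => by
      simp only [uPol]
      have h1 : ∀ i, p i ≤ Function.update s (d k s) (s (d k s) + 1) i := by
        intro i
        rcases eq_or_ne i (d k s) with rfl | hia
        · simp only [Function.update_self]; exact Nat.le_succ_of_le (h _)
        · simpa [Function.update_of_ne hia] using h i
      rw [uPol_allMet p d k _ h1, uPol_allMet p d k s h]; ring

/-- Exchange property at horizon `k`. -/
def ExchP (β : Fin N → ℝ) (p : Fin N → ℕ) (k : ℕ) : Prop :=
  ∀ (s : Fin N → ℕ) (a b : Fin N), s a < p a → s b < p b →
    β a * uStar β (rwd p) k (Function.update s a (s a + 1)) + (1 - β a) * uStar β (rwd p) k s =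
    β b * uStar β (rwd p) k (Function.update s b (s b + 1)) + (1 - β b) * uStar β (rwd p) k s

lemma main_of_exch {β : Fin N → ℝ} [NeZero N] (hβ : ∀ a, 0 < β a ∧ β a ≤ 1)
    (p : Fin N → ℕ) {k : ℕ} (hE : ExchP β p k) :
    ∀ (s : Fin N → ℕ) (a : Fin N), s a < p a →
      uStar β (rwd p) (k + 1) s =
        β a * uStar β (rwd p) k (Function.update s a (s a + 1))
          + (1 - β a) * uStar β (rwd p) k s := by
  intro s a ha
  haveI : Nonempty (Fin N) := ⟨⟨0, Nat.pos_of_ne_zero (NeZero.ne N)⟩⟩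
  simp only [uStar]
  apply le_antisymm
  · apply ciSup_le
    intro b
    by_cases hb : s b < p b
    · exact (hE s b a hb ha).le
    · push_neg at hb
      have hclip : uStar β (rwd p) k (Function.update s b (s b + 1)) = uStar β (rwd p) k s := by
        apply uStar_clip
        intro i
        rcases eq_or_ne i b with rfl | hib
        · simp only [Function.update_self]; omega
        · simp [Function.update_of_ne hib]
      have hmono : uStar β (rwd p) k s ≤ uStar β (rwd p) k (Function.update s a (s a + 1)) := by
        apply uStar_mono hβ p
        intro i
        rcases eq_or_ne i a with rfl | hia
        · simp
        · simp [Function.update_of_ne hia]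
      have hba := hβ b
      have haa := hβ a
      rw [hclip]
      nlinarith [hmono, haa.1, hba.1, hba.2]
  · exact le_ciSup (f := fun b : Fin N => β b * uStar β (rwd p) k (Function.update s b (s b + 1))
      + (1 - β b) * uStar β (rwd p) k s) ((Set.finite_range _).bddAbove) a

lemma update_update_comm {s : Fin N → ℕ} {a b : Fin N} (hab : a ≠ b) :
    Function.update (Function.update s a (s a + 1)) b (s b + 1) =
    Function.update (Function.update s b (s b + 1)) a (s a + 1) := by
  funext i
  rcases eq_or_ne i a with rfl | hia
  · simp [Function.update_of_ne hab, Function.update_of_ne (Ne.symm hab), Function.update_self]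
  · rcases eq_or_ne i b with rfl | hib
    · simp [Function.update_of_ne hab, Function.update_of_ne (Ne.symm hab), Function.update_self,
        Function.update_of_ne hia]
    · simp [Function.update_of_ne hia, Function.update_of_ne hib]

lemma exch {β : Fin N → ℝ} [NeZero N] (hβ : ∀ a, 0 < β a ∧ β a ≤ 1) (p : Fin N → ℕ) :
    ∀ k, ExchP β p k := by
  intro k
  induction k with
  | zero =>
      intro s a b ha hb
      rcases eq_or_ne a b with rfl | hab
      · rfl
      · have h0 : uStar β (rwd p) 0 s = 0 := by
          simp only [uStar, rwd]
          rw [if_neg]; push_neg; exact ⟨a, ha⟩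
        have h1 : uStar β (rwd p) 0 (Function.update s a (s a + 1)) = 0 := by
          simp only [uStar, rwd]
          rw [if_neg]; push_neg
          exact ⟨b, by simpa [Function.update_of_ne (Ne.symm hab)] using hb⟩
        have h2 : uStar β (rwd p) 0 (Function.update s b (s b + 1)) = 0 := by
          simp only [uStar, rwd]
          rw [if_neg]; push_neg
          exact ⟨a, by simpa [Function.update_of_ne hab] using ha⟩
        rw [h0, h1, h2]; ring
  | succ k ih =>
      intro s a b ha hb
      rcases eq_or_ne a b with rfl | hab
      · rfl
      · have main := main_of_exch hβ p ih
        have hb' : Function.update s a (s a + 1) b < p b := by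
          simpa [Function.update_of_ne (Ne.symm hab)] using hb
        have ha' : Function.update s b (s b + 1) a < p a := by
          simpa [Function.update_of_ne hab] using ha
        have h1 := main (Function.update s a (s a + 1)) b hb'
        have h2 := main s b hb
        have h3 := main (Function.update s b (s b + 1)) a ha'
        have h4 := main s a ha
        rw [Function.update_of_ne (Ne.symm hab)] at h1
        rw [Function.update_of_ne hab] at h3
        rw [h1, h3]
        conv_lhs => rw [h2]
        conv_rhs => rw [h4]
        rw [update_update_comm hab]
        ring

end Aux

/-- With a single common terminal deadline (terminal reward `1` iff `s i ≥ p i` for all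
users `i`):
(a) the success probability of any policy is invariant under relabeling of the users
(it depends only on the multiset of pairs `(β i, p i)`), and
(b) every work-conserving policy — one that always serves a user with unmet demand
whenever some user has unmet demand — achieves the maximum success probability. -/
theorem stmt_0 {N : ℕ} [NeZero N] (β : Fin N → ℝ) (hβ : ∀ a, 0 < β a ∧ β a ≤ 1)
    (p : Fin N → ℕ) :
    (∀ (σ : Equiv.Perm (Fin N)) (d : ℕ → (Fin N → ℕ) → Fin N) (k : ℕ) (s : Fin N → ℕ),
      uPol (fun i => β (σ i)) (fun z => if ∀ i, p (σ i) ≤ z i then (1 : ℝ) else 0)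
          (fun k z => σ.symm (d k (fun i => z (σ.symm i)))) k (fun i => s (σ i)) =
        uPol β (fun z => if ∀ i, p i ≤ z i then (1 : ℝ) else 0) d k s) ∧
    (∀ d : ℕ → (Fin N → ℕ) → Fin N,
      (∀ k s, (∃ i, s i < p i) → s (d k s) < p (d k s)) →
      ∀ k s, uPol β (fun z => if ∀ i, p i ≤ z i then (1 : ℝ) else 0) d k s =
        uStar β (fun z => if ∀ i, p i ≤ z i then (1 : ℝ) else 0) k s) := by
  constructor
  · -- part (a): relabeling invariance
    intro σ d k
    induction k with
    | zero =>
        intro s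
        simp only [uPol]
        have hiff : (∀ i, p (σ i) ≤ s (σ i)) ↔ (∀ i, p i ≤ s i) := by
          constructor
          · intro h i; simpa using h (σ.symm i)
          · intro h i; exact h (σ i)
        rw [if_congr hiff rfl rfl]
    | succ k ih =>
        intro s
        simp only [uPol]
        have hs : (fun i => (fun j => s (σ j)) (σ.symm i)) = s := by
          funext i; simp
        rw [hs]
        set a := d k s with hadef
        have hβeq : β (σ (σ.symm a)) = β a := by simp
        have hupd : Function.update (fun i => s (σ i)) (σ.symm a)
            ((fun i => s (σ i)) (σ.symm a) + 1)
            = fun i => Function.update s a (s a + 1) (σ i) := by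
          funext i
          rcases eq_or_ne i (σ.symm a) with rfl | hia
          · simp only [Function.update_self, Equiv.apply_symm_apply]
          · have : σ i ≠ a := by
              intro hc
              exact hia (by rw [← hc]; simp)
            rw [Function.update_of_ne hia, Function.update_of_ne this]
        rw [hβeq, hupd, ih (Function.update s a (s a + 1)), ih s]
  · -- part (b): work-conserving policies are optimal
    intro d hd k
    induction k with
    | zero => intro s; rfl
    | succ k ih =>
        intro s
        by_cases h : ∃ i, s i < p i
        · have ha : s (d k s) < p (d k s) := hd k s h
          have main := main_of_exch hβ p (exch hβ p k) s (d k s) ha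
          show uPol β (rwd p) d (k+1) s = uStar β (rwd p) (k+1) s
          simp only [uPol]
          rw [show uPol β (rwd p) d k = uStar β (rwd p) k from funext ih] at *
          rw [main]
        · push_neg at h
          show uPol β (rwd p) d (k+1) s = uStar β (rwd p) (k+1) s
          rw [uPol_allMet p d (k+1) s h, uStar_allMet p (k+1) s h]
end

section
/- In the two-user, horizon-T scheduling MDP where user 1 needs q_1 more packets by slot l_1 and user 2 needs q_2 more packets by slot l_2 with l_1 ≤ l_2 ≤ T, serving user 1 until its demand is met and then serving user 2 maximizes the probability that both users meet their deadlines, over all (possibly history-dependent) scheduling policies. -/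
open MeasureTheory ProbabilityTheory

/-- History of a (possibly history-dependent) two-user scheduling policy `π` after `t`
slots: given per-slot potential outcomes `b t i` (success of a transmission to user `i`
in slot `t`), the policy looks at the full past history of (served user, outcome) pairs
and picks the user to serve in the next slot. -/
def run (π : List (Fin 2 × Bool) → Fin 2) (b : ℕ → Fin 2 → Bool) : ℕ → List (Fin 2 × Bool)
  | 0 => []
  | t + 1 =>
      let h := run π b t
      h ++ [(π h, b t (π h))]

/-- Number of successful deliveries to user `i` recorded in history `h`. -/
def succCount (i : Fin 2) (h : List (Fin 2 × Bool)) : ℕ :=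
  h.countP fun x => decide (x.1 = i) && x.2

namespace Stmt7


abbrev Pol := List (Fin 2 × Bool) → Fin 2
abbrev Hist := List (Fin 2 × Bool)

/-- weight of a Bernoulli outcome -/
def w (p : ℝ) (s : Bool) : ℝ := if s then p else 1 - p

lemma w_nonneg {p : ℝ} (h0 : 0 ≤ p) (h1 : p ≤ 1) (s : Bool) : 0 ≤ w p s := by
  cases s <;> simp [w] <;> linarith

/-- extend a history by following policy `π` with outcome list `s` -/
def ext (π : Pol) : Hist → List Bool → Hist
  | h, [] => h
  | h, x :: s => ext π (h ++ [(π h, x)]) s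

/-- probability weight of the outcome list `s` starting from history `h` -/
def wtl (β : Fin 2 → ℝ) (π : Pol) : Hist → List Bool → ℝ
  | _, [] => 1
  | h, x :: s => w (β (π h)) x * wtl β π (h ++ [(π h, x)]) s

/-- all Bool lists of length n -/
def allB : ℕ → Finset (List Bool)
  | 0 => {[]}
  | n+1 => ((allB n).image (List.cons true)) ∪ ((allB n).image (List.cons false))

/-- value of policy `π` with terminal payoff `g`, `k` slots remaining, history `h` -/
def Wv (β : Fin 2 → ℝ) (π : Pol) (g : Hist → ℝ) : ℕ → Hist → ℝ
  | 0, h => g h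
  | k+1, h => β (π h) * Wv β π g k (h ++ [(π h, true)])
      + (1 - β (π h)) * Wv β π g k (h ++ [(π h, false)])

lemma mem_allB {s : List Bool} : ∀ {n : ℕ}, s ∈ allB n ↔ s.length = n := by
  induction s with
  | nil => intro n; cases n <;> simp [allB]
  | cons x s ih =>
    intro n
    cases n with
    | zero => simp [allB]
    | succ n => cases x <;> simp [allB, ih]

lemma sum_allB_succ {M : Type*} [AddCommMonoid M] (n : ℕ) (f : List Bool → M) :
    ∑ s ∈ allB (n+1), f s = (∑ s ∈ allB n, f (true :: s)) + ∑ s ∈ allB n, f (false :: s) := by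
  rw [allB, Finset.sum_union, Finset.sum_image (fun _ _ _ _ h => by injection h),
    Finset.sum_image (fun _ _ _ _ h => by injection h)]
  rw [Finset.disjoint_left]
  rintro a ha hb
  simp only [Finset.mem_image] at ha hb
  obtain ⟨u, -, hu⟩ := ha
  obtain ⟨v, -, hv⟩ := hb
  rw [← hv] at hu; simp at hu

lemma Wv_eq_sum (β : Fin 2 → ℝ) (π : Pol) (g : Hist → ℝ) :
    ∀ (k : ℕ) (h : Hist), Wv β π g k h = ∑ s ∈ allB k, wtl β π h s * g (ext π h s) := by
  intro k
  induction k with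
  | zero => intro h; simp [Wv, allB, wtl, ext]
  | succ k ih =>
    intro h
    rw [Wv, sum_allB_succ, ih, ih]
    simp only [wtl, ext, w]
    rw [Finset.mul_sum, Finset.mul_sum]
    simp [mul_assoc]

lemma ext_append (π : Pol) : ∀ (s : List Bool) (h : Hist) (x : Bool),
    ext π h (s ++ [x]) = ext π h s ++ [(π (ext π h s), x)] := by
  intro s
  induction s with
  | nil => intro h x; simp [ext]
  | cons y s ih => intro h x; simp only [List.cons_append, ext]; exact ih _ _

lemma ext_pref (π : Pol) : ∀ (s : List Bool) (h : Hist), ∃ r, ext π h s = h ++ r := by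
  intro s
  induction s with
  | nil => intro h; exact ⟨[], by simp [ext]⟩
  | cons x s ih =>
    intro h
    obtain ⟨r, hr⟩ := ih (h ++ [(π h, x)])
    exact ⟨(π h, x) :: r, by simp [ext, hr]⟩

lemma ext_length (π : Pol) : ∀ (s : List Bool) (h : Hist),
    (ext π h s).length = h.length + s.length := by
  intro s
  induction s with
  | nil => intro h; simp [ext]
  | cons x s ih => intro h; simp [ext, ih]; omega

lemma ext_map_snd (π : Pol) : ∀ (s : List Bool) (h : Hist),
    (ext π h s).map Prod.snd = h.map Prod.snd ++ s := by
  intro s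
  induction s with
  | nil => intro h; simp [ext]
  | cons x s ih => intro h; simp [ext, ih]

lemma ext_take (π : Pol) : ∀ (s : List Bool) (h : Hist) (t : ℕ), t ≤ s.length →
    ext π h (s.take t) = (ext π h s).take (h.length + t) := by
  intro s
  induction s with
  | nil =>
    intro h t ht
    simp only [List.length_nil, Nat.le_zero] at ht
    simp [ht, ext]
  | cons x s ih =>
    intro h t ht
    cases t with
    | zero =>
      obtain ⟨r, hr⟩ := ext_pref π (x :: s) h
      rw [List.take_zero, Nat.add_zero, hr, List.take_left]
      rfl
    | succ t =>
      have := ih (h ++ [(π h, x)]) t (by simpa using ht)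
      simp only [List.take_succ_cons, ext, this, List.length_append, List.length_cons,
        List.length_nil]
      congr 1
      omega

lemma take_succ_getD : ∀ (s : List Bool) (t : ℕ), t < s.length →
    s.take (t+1) = s.take t ++ [s.getD t false] := by
  intro s
  induction s with
  | nil => intro t ht; simp at ht
  | cons x s ih =>
    intro t ht
    cases t with
    | zero => simp
    | succ t => simp [List.take_succ_cons, ih t (by simpa using ht)]

lemma run_length (π : Pol) (b : ℕ → Fin 2 → Bool) : ∀ n, (run π b n).length = n := by
  intro n
  induction n with
  | zero => rfl
  | succ n ih => simp [run, ih]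

lemma run_take (π : Pol) (b : ℕ → Fin 2 → Bool) : ∀ (n t : ℕ), t ≤ n →
    (run π b n).take t = run π b t := by
  intro n
  induction n with
  | zero => intro t ht; interval_cases t; simp [run]
  | succ n ih =>
    intro t ht
    rcases Nat.lt_or_ge t (n+1) with h | h
    · have ht' : t ≤ n := by omega
      show (run π b n ++ _).take t = _
      rw [List.take_append_of_le_length (by rw [run_length]; exact ht'), ih t ht']
    · have : t = n + 1 := by omega
      subst this
      exact List.take_of_length_le (by rw [run_length])

lemma run_map_snd (π : Pol) (b : ℕ → Fin 2 → Bool) : ∀ n,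
    ext π ([]) ((run π b n).map Prod.snd) = run π b n := by
  intro n
  induction n with
  | zero => rfl
  | succ n ih =>
    show ext π ([]) ((run π b n ++ [(π (run π b n), b n (π (run π b n)))]).map Prod.snd)
      = run π b n ++ _
    rw [List.map_append, List.map_singleton, ext_append, ih]

lemma run_of_match (π : Pol) (b : ℕ → Fin 2 → Bool) (s : List Bool)
    (hm : ∀ t < s.length, b t (π (ext π ([]) (s.take t))) = s.getD t false) :
    run π b s.length = ext π ([]) s := by
  have key : ∀ k ≤ s.length, run π b k = ext π ([]) (s.take k) := by
    intro k
    induction k with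
    | zero => intro _; rfl
    | succ k ih =>
      intro hk
      have hk' : k < s.length := by omega
      show run π b k ++ [(π (run π b k), b k (π (run π b k)))] = _
      rw [ih (by omega), take_succ_getD s k hk', ext_append, hm k hk']
  have := key s.length le_rfl
  rwa [List.take_of_length_le le_rfl] at this

lemma match_of_run (π : Pol) (b : ℕ → Fin 2 → Bool) (s : List Bool)
    (hr : run π b s.length = ext π ([]) s) :
    ∀ t < s.length, b t (π (ext π ([]) (s.take t))) = s.getD t false := by
  intro t ht
  have h1 : ∀ u ≤ s.length, run π b u = ext π ([]) (s.take u) := by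
    intro u hu
    rw [← run_take π b s.length u hu, hr, ext_take π s ([]) u hu]
    norm_num
  have e1 : run π b (t+1) = ext π ([]) (s.take t) ++ [(π (ext π ([]) (s.take t)), s.getD t false)] := by
    rw [h1 (t+1) (by omega), take_succ_getD s t ht, ext_append]
  have e2 : run π b (t+1) = ext π ([]) (s.take t) ++ [(π (ext π ([]) (s.take t)),
      b t (π (ext π ([]) (s.take t))))] := by
    show run π b t ++ _ = _
    rw [h1 t (by omega)]
  rw [e2] at e1
  have := List.append_cancel_left e1
  simpa using congrArg (fun l => (l.headD (0, false)).2) this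

lemma wtl_nonneg (β : Fin 2 → ℝ) (hβ : ∀ i, 0 < β i ∧ β i ≤ 1) (π : Pol) :
    ∀ (s : List Bool) (h : Hist), 0 ≤ wtl β π h s := by
  intro s
  induction s with
  | nil => intro h; simp [wtl]
  | cons x s ih =>
    intro h
    exact mul_nonneg (w_nonneg (hβ _).1.le (hβ _).2 _) (ih _)

lemma wtl_prod (β : Fin 2 → ℝ) (π : Pol) : ∀ (s : List Bool) (h : Hist),
    wtl β π h s = ∏ t ∈ Finset.range s.length, w (β (π (ext π h (s.take t)))) (s.getD t false) := by
  intro s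
  induction s with
  | nil => intro h; simp [wtl]
  | cons x s ih =>
    intro h
    rw [List.length_cons, Finset.prod_range_succ']
    simp only [List.take_succ_cons, List.getD_cons_succ, List.take_zero, List.getD_cons_zero]
    show wtl β π h (x :: s) = (∏ t ∈ Finset.range s.length,
      w (β (π (ext π (h ++ [(π h, x)]) (s.take t)))) (s.getD t false)) * w (β (π h)) x
    rw [wtl, ← ih, mul_comm]




/-- probability of at least `r` successes in `k` Bernoulli(`p`) trials -/
def Phi (p : ℝ) : ℕ → ℕ → ℝ
  | _, 0 => 1
  | 0, _+1 => 0
  | k+1, r+1 => p * Phi p k r + (1-p) * Phi p k (r+1)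

section PhiLemmas

variable {p : ℝ} (h0 : 0 ≤ p) (h1 : p ≤ 1)
include h0 h1

lemma Phi_zero_right (k : ℕ) : Phi p k 0 = 1 := by cases k <;> rfl

lemma Phi_nonneg : ∀ k r, 0 ≤ Phi p k r := by
  intro k
  induction k with
  | zero => intro r; cases r <;> simp [Phi]
  | succ k ih =>
    intro r
    cases r with
    | zero => simp [Phi]
    | succ r =>
      have := ih r; have := ih (r+1)
      rw [Phi]; nlinarith

lemma Phi_le_one : ∀ k r, Phi p k r ≤ 1 := by
  intro k
  induction k with
  | zero => intro r; cases r <;> simp [Phi]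
  | succ k ih =>
    intro r
    cases r with
    | zero => simp [Phi]
    | succ r =>
      have := ih r; have := ih (r+1)
      rw [Phi]; nlinarith

lemma Phi_succ_le : ∀ k r, Phi p k (r+1) ≤ Phi p k r := by
  intro k
  induction k with
  | zero =>
    intro r
    cases r with
    | zero => simpa [Phi] using Phi_le_one h0 h1 0 1
    | succ r => simp [Phi]
  | succ k ih =>
    intro r
    cases r with
    | zero => simpa [Phi] using Phi_le_one h0 h1 (k+1) 1
    | succ r =>
      have i1 := ih r; have i2 := ih (r+1)
      rw [Phi, Phi]; nlinarith

lemma Phi_mono_k : ∀ k r, Phi p k r ≤ Phi p (k+1) r := by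
  intro k r
  cases r with
  | zero => simp [Phi_zero_right h0 h1]
  | succ r =>
    have := Phi_succ_le h0 h1 k r
    rw [Phi]; nlinarith

end PhiLemmas

/-- EDF value function: `k` slots remaining, `a` successes so far for user 0 (within
its deadline), `b` successes so far for user 1.  `m` is the number of slots after
user 0's deadline; user 0's remaining slots are `k - m`. -/
def Vv (p0 p1 : ℝ) (q₁ q₂ m : ℕ) : ℕ → ℕ → ℕ → ℝ
  | 0, a, b => if q₁ ≤ a then Phi p1 0 (q₂ - b) else 0
  | k+1, a, b => if q₁ ≤ a then Phi p1 (k+1) (q₂ - b)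
      else if k+1 ≤ m then 0
      else p0 * Vv p0 p1 q₁ q₂ m k (a+1) b + (1-p0) * Vv p0 p1 q₁ q₂ m k a b

section VvLemmas

variable {p0 p1 : ℝ} {q₁ q₂ m : ℕ}
variable (h00 : 0 ≤ p0) (h01 : p0 ≤ 1) (h10 : 0 ≤ p1) (h11 : p1 ≤ 1)

lemma Vv_top {a : ℕ} (h : q₁ ≤ a) (k b : ℕ) :
    Vv p0 p1 q₁ q₂ m k a b = Phi p1 k (q₂ - b) := by
  cases k <;> simp [Vv, h]

lemma Vv_low {a : ℕ} (ha : ¬ q₁ ≤ a) {k : ℕ} (hk : k ≤ m) (b : ℕ) :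
    Vv p0 p1 q₁ q₂ m k a b = 0 := by
  cases k <;> simp [Vv, ha, hk]

lemma Vv_rec {a k : ℕ} (ha : ¬ q₁ ≤ a) (hk : m < k + 1) (b : ℕ) :
    Vv p0 p1 q₁ q₂ m (k+1) a b
      = p0 * Vv p0 p1 q₁ q₂ m k (a+1) b + (1-p0) * Vv p0 p1 q₁ q₂ m k a b := by
  simp [Vv, ha, Nat.not_le.mpr hk]

include h00 h01 h10 h11

lemma Vv_nonneg : ∀ k a b, 0 ≤ Vv p0 p1 q₁ q₂ m k a b := by
  intro k
  induction k with
  | zero =>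
    intro a b
    by_cases h : q₁ ≤ a <;> simp [Vv, h, Phi_nonneg h10 h11]
  | succ k ih =>
    intro a b
    by_cases h : q₁ ≤ a
    · simp [Vv, h, Phi_nonneg h10 h11]
    · by_cases hk : k + 1 ≤ m
      · simp [Vv, h, hk]
      · rw [Vv_rec h (by omega)]
        have := ih (a+1) b; have := ih a b
        nlinarith

lemma Vv_mono_a : ∀ k a b, Vv p0 p1 q₁ q₂ m k a b ≤ Vv p0 p1 q₁ q₂ m k (a+1) b := by
  intro k
  induction k with
  | zero =>
    intro a b
    by_cases h : q₁ ≤ a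
    · simp [Vv, h, (by omega : q₁ ≤ a + 1)]
    · by_cases h' : q₁ ≤ a + 1 <;> simp [Vv, h, h', Phi_nonneg h10 h11]
  | succ k ih =>
    intro a b
    by_cases h : q₁ ≤ a
    · simp [Vv_top h, Vv_top (by omega : q₁ ≤ a + 1)]
    · by_cases hk : k + 1 ≤ m
      · rw [Vv_low h hk]
        exact Vv_nonneg h00 h01 h10 h11 _ _ _
      · rw [Vv_rec h (by omega)]
        by_cases h' : q₁ ≤ a + 1
        · rw [Vv_top h' k b, Vv_top h' (k+1) b]
          have e2 : Vv p0 p1 q₁ q₂ m k a b ≤ Phi p1 k (q₂ - b) :=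
            (ih a b).trans (le_of_eq (Vv_top h' k b))
          have := Phi_mono_k h10 h11 k (q₂ - b)
          nlinarith
        · rw [Vv_rec h' (by omega)]
          have := ih (a+1) b; have := ih a b
          nlinarith

lemma Vv_mono_k : ∀ k a b, Vv p0 p1 q₁ q₂ m k a b ≤ Vv p0 p1 q₁ q₂ m (k+1) a b := by
  intro k a b
  by_cases h : q₁ ≤ a
  · rw [Vv_top h, Vv_top h]
    exact Phi_mono_k h10 h11 k (q₂ - b)
  · by_cases hk : k + 1 ≤ m
    · rw [Vv_low h hk, Vv_low h (by omega)]
    · rw [Vv_rec h (by omega)]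
      have h2 : Vv p0 p1 q₁ q₂ m k a b ≤ Vv p0 p1 q₁ q₂ m k (a+1) b :=
        Vv_mono_a h00 h01 h10 h11 k a b
      nlinarith

lemma Vv_sat {a : ℕ} (h : q₁ ≤ a) (k b : ℕ) :
    p1 * Vv p0 p1 q₁ q₂ m k a (b+1) + (1-p1) * Vv p0 p1 q₁ q₂ m k a b
      = Vv p0 p1 q₁ q₂ m (k+1) a b := by
  rw [Vv_top h, Vv_top h, Vv_top h]
  by_cases hb : q₂ ≤ b
  · have e1 : q₂ - b = 0 := by omega
    have e2 : q₂ - (b+1) = 0 := by omega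
    rw [e1, e2, Phi_zero_right h10 h11, Phi_zero_right h10 h11]
    ring
  · have e1 : q₂ - b = (q₂ - (b+1)) + 1 := by omega
    rw [e1]
    rfl

lemma Vv_serve1 : ∀ k a b,
    p1 * Vv p0 p1 q₁ q₂ m k a (b+1) + (1-p1) * Vv p0 p1 q₁ q₂ m k a b
      ≤ Vv p0 p1 q₁ q₂ m (k+1) a b := by
  intro k
  induction k with
  | zero =>
    intro a b
    by_cases h : q₁ ≤ a
    · exact le_of_eq (Vv_sat h00 h01 h10 h11 h 0 b)
    · rw [Vv_low h (by omega), Vv_low h (by omega)]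
      simpa using Vv_nonneg (p0:=p0) (p1:=p1) (q₁:=q₁) (q₂:=q₂) (m:=m) h00 h01 h10 h11 1 a b
  | succ k ih =>
    intro a b
    by_cases h : q₁ ≤ a
    · exact le_of_eq (Vv_sat h00 h01 h10 h11 h (k+1) b)
    · by_cases hk : k + 1 ≤ m
      · rw [Vv_low h hk, Vv_low h hk]
        simpa using Vv_nonneg (p0:=p0) (p1:=p1) (q₁:=q₁) (q₂:=q₂) (m:=m) h00 h01 h10 h11
          (k+1+1) a b
      · have hm : m < k + 1 := by omega
        rw [Vv_rec h hm, Vv_rec h hm, Vv_rec h (by omega : m < k + 1 + 1)]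
        have key1 : p1 * Vv p0 p1 q₁ q₂ m k (a+1) (b+1)
            + (1-p1) * Vv p0 p1 q₁ q₂ m k (a+1) b ≤ Vv p0 p1 q₁ q₂ m (k+1) (a+1) b := by
          by_cases h' : q₁ ≤ a + 1
          · exact le_of_eq (Vv_sat h00 h01 h10 h11 h' k b)
          · exact ih (a+1) b
        have key2 := ih a b
        nlinarith [mul_le_mul_of_nonneg_left key1 h00,
          mul_le_mul_of_nonneg_left key2 (by linarith : (0:ℝ) ≤ 1 - p0)]

lemma Vv_serve0 {k : ℕ} (hk : m < k + 1) (a b : ℕ) :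
    p0 * Vv p0 p1 q₁ q₂ m k (a+1) b + (1-p0) * Vv p0 p1 q₁ q₂ m k a b
      ≤ Vv p0 p1 q₁ q₂ m (k+1) a b := by
  by_cases h : q₁ ≤ a
  · rw [Vv_top h, Vv_top (by omega : q₁ ≤ a + 1), Vv_top h]
    have := Phi_mono_k h10 h11 k (q₂ - b)
    nlinarith
  · exact le_of_eq (Vv_rec h hk b).symm

end VvLemmas




lemma succCount_append (i : Fin 2) (h : Hist) (y : Fin 2 × Bool) :
    succCount i (h ++ [y]) = succCount i h + (if y.1 = i ∧ y.2 = true then 1 else 0) := by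
  rw [succCount, List.countP_append, succCount]
  congr 1
  rw [List.countP_cons, List.countP_nil]
  by_cases h1 : y.1 = i <;> by_cases h2 : y.2 = true <;> simp [h1, h2]

lemma succCount_take_le (i : Fin 2) (h : Hist) (l : ℕ) :
    succCount i (h.take l) ≤ succCount i h := by
  conv_rhs => rw [← List.take_append_drop l h]
  rw [succCount, succCount, List.countP_append]
  exact Nat.le_add_right _ _

lemma fin2 (i : Fin 2) : i = 0 ∨ i = 1 := by fin_cases i <;> simp

/-- terminal payoff: both deadlines met -/
def gf (q₁ q₂ l₁ : ℕ) : Hist → ℝ := fun h =>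
  if q₁ ≤ succCount 0 (h.take l₁) ∧ q₂ ≤ succCount 1 h then 1 else 0

lemma Wv_nonneg (β : Fin 2 → ℝ) (hβ : ∀ i, 0 < β i ∧ β i ≤ 1) (π : Pol) (g : Hist → ℝ)
    (hg : ∀ h, 0 ≤ g h) : ∀ k h, 0 ≤ Wv β π g k h := by
  intro k
  induction k with
  | zero => intro h; exact hg h
  | succ k ih =>
    intro h
    have h1 := (hβ (π h)).1.le
    have h2 := (hβ (π h)).2
    have := ih (h ++ [(π h, true)])
    have := ih (h ++ [(π h, false)])
    rw [Wv]; nlinarith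

section Main

variable {β : Fin 2 → ℝ} (hβ : ∀ i, 0 < β i ∧ β i ≤ 1) {q₁ q₂ l₁ l₂ : ℕ} (h12 : l₁ ≤ l₂)
include hβ h12

lemma UB (π : Pol) : ∀ (k : ℕ) (h : Hist), h.length + k = l₂ →
    Wv β π (gf q₁ q₂ l₁) k h
      ≤ Vv (β 0) (β 1) q₁ q₂ (l₂ - l₁) k (succCount 0 (h.take l₁)) (succCount 1 h) := by
  have h00 := (hβ 0).1.le; have h01 := (hβ 0).2
  have h10 := (hβ 1).1.le; have h11 := (hβ 1).2
  intro k
  induction k with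
  | zero =>
    intro h _
    by_cases hc : q₁ ≤ succCount 0 (h.take l₁) ∧ q₂ ≤ succCount 1 h
    · have e : q₂ - succCount 1 h = 0 := by omega
      have hg : gf q₁ q₂ l₁ h = 1 := if_pos hc
      rw [Wv, hg, Vv_top hc.1, e, Phi_zero_right h10 h11]
    · have hg : gf q₁ q₂ l₁ h = 0 := if_neg hc
      rw [Wv, hg]
      exact Vv_nonneg h00 h01 h10 h11 _ _ _
  | succ k ih =>
    intro h hlen
    rcases fin2 (π h) with hi | hi
    · -- serves user 0
      by_cases hl : h.length < l₁
      · -- phase 1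
        have hm : l₂ - l₁ < k + 1 := by omega
        have htk : h.take l₁ = h := List.take_of_length_le (by omega)
        have et : ∀ y : Fin 2 × Bool, (h ++ [y]).take l₁ = h ++ [y] :=
          fun y => List.take_of_length_le (by simp; omega)
        have e1 : succCount 0 ((h ++ [((0:Fin 2), true)]).take l₁)
            = succCount 0 (h.take l₁) + 1 := by
          rw [et, succCount_append, htk]; simp
        have e2 : succCount 0 ((h ++ [((0:Fin 2), false)]).take l₁)
            = succCount 0 (h.take l₁) := by
          rw [et, succCount_append, htk]; simp
        have e3 : ∀ x, succCount 1 (h ++ [((0:Fin 2), x)]) = succCount 1 h := by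
          intro x; rw [succCount_append]; simp
        have i1 := ih (h ++ [((0:Fin 2), true)]) (by simp; omega)
        have i2 := ih (h ++ [((0:Fin 2), false)]) (by simp; omega)
        rw [e1, e3] at i1
        rw [e2, e3] at i2
        rw [Wv, hi]
        have hs0 := Vv_serve0 (p1 := β 1) (q₁ := q₁) (q₂ := q₂) h00 h01 h10 h11 hm
          (succCount 0 (h.take l₁)) (succCount 1 h)
        have hb0 := (hβ 0).1.le
        have hb0' := (hβ 0).2
        nlinarith [mul_le_mul_of_nonneg_left i1 hb0,
          mul_le_mul_of_nonneg_left i2 (by linarith : (0:ℝ) ≤ 1 - β 0)]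
      · -- phase 2, serving user 0 changes nothing that matters
        have et : ∀ y : Fin 2 × Bool, (h ++ [y]).take l₁ = h.take l₁ :=
          fun y => List.take_append_of_le_length (by omega)
        have e3 : ∀ x, succCount 1 (h ++ [((0:Fin 2), x)]) = succCount 1 h := by
          intro x; rw [succCount_append]; simp
        have i1 := ih (h ++ [((0:Fin 2), true)]) (by simp; omega)
        have i2 := ih (h ++ [((0:Fin 2), false)]) (by simp; omega)
        rw [et, e3] at i1
        rw [et, e3] at i2
        rw [Wv, hi]
        have hmk := Vv_mono_k (p0 := β 0) (p1 := β 1) (q₁ := q₁) (q₂ := q₂) (m := l₂ - l₁)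
          h00 h01 h10 h11 k (succCount 0 (h.take l₁)) (succCount 1 h)
        have hb0 := (hβ 0).1.le
        have hb0' := (hβ 0).2
        nlinarith [mul_le_mul_of_nonneg_left i1 hb0,
          mul_le_mul_of_nonneg_left i2 (by linarith : (0:ℝ) ≤ 1 - β 0)]
    · -- serves user 1
      have e0 : ∀ x, succCount 0 ((h ++ [((1:Fin 2), x)]).take l₁)
          = succCount 0 (h.take l₁) := by
        intro x
        by_cases hl : h.length < l₁
        · rw [List.take_of_length_le (l := h ++ _) (by simp; omega),
            List.take_of_length_le (l := h) (by omega), succCount_append]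
          simp
        · rw [List.take_append_of_le_length (by omega)]
      have e1 : succCount 1 (h ++ [((1:Fin 2), true)]) = succCount 1 h + 1 := by
        rw [succCount_append]; simp
      have e2 : succCount 1 (h ++ [((1:Fin 2), false)]) = succCount 1 h := by
        rw [succCount_append]; simp
      have i1 := ih (h ++ [((1:Fin 2), true)]) (by simp; omega)
      have i2 := ih (h ++ [((1:Fin 2), false)]) (by simp; omega)
      rw [e0, e1] at i1
      rw [e0, e2] at i2
      rw [Wv, hi]
      have hs1 := Vv_serve1 (p0 := β 0) (q₁ := q₁) (q₂ := q₂) (m := l₂ - l₁) h00 h01 h10 h11 k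
        (succCount 0 (h.take l₁)) (succCount 1 h)
      have hb1 := (hβ 1).1.le
      have hb1' := (hβ 1).2
      nlinarith [mul_le_mul_of_nonneg_left i1 hb1,
        mul_le_mul_of_nonneg_left i2 (by linarith : (0:ℝ) ≤ 1 - β 1)]

/-- the EDF policy -/
def edf (q₁ : ℕ) : Pol := fun h => if succCount 0 h < q₁ then 0 else 1

lemma LB : ∀ (k : ℕ) (h : Hist), h.length + k = l₂ →
    Vv (β 0) (β 1) q₁ q₂ (l₂ - l₁) k (succCount 0 (h.take l₁)) (succCount 1 h)
      ≤ Wv β (edf q₁) (gf q₁ q₂ l₁) k h := by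
  have h00 := (hβ 0).1.le; have h01 := (hβ 0).2
  have h10 := (hβ 1).1.le; have h11 := (hβ 1).2
  intro k
  induction k with
  | zero =>
    intro h _
    by_cases ha : q₁ ≤ succCount 0 (h.take l₁)
    · rw [Vv_top ha]
      by_cases hb : q₂ ≤ succCount 1 h
      · have e : q₂ - succCount 1 h = 0 := by omega
        have hg : gf q₁ q₂ l₁ h = 1 := if_pos ⟨ha, hb⟩
        rw [e, Phi_zero_right h10 h11, Wv, hg]
      · have e : Phi (β 1) 0 (q₂ - succCount 1 h) = 0 := by
          have e' : q₂ - succCount 1 h = (q₂ - succCount 1 h - 1) + 1 := by omega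
          rw [e']; rfl
        rw [e, Wv]
        simp only [gf]; split <;> norm_num
    · rw [Vv_low ha (by omega), Wv]
      simp only [gf]; split <;> norm_num
  | succ k ih =>
    intro h hlen
    by_cases ha : q₁ ≤ succCount 0 (h.take l₁)
    · -- user 0 satisfied; edf serves 1
      have ha' : q₁ ≤ succCount 0 h := le_trans ha (succCount_take_le 0 h l₁)
      have hpol : edf q₁ h = 1 := by rw [edf]; simp [Nat.not_lt.mpr ha']
      have e0 : ∀ x, succCount 0 ((h ++ [((1:Fin 2), x)]).take l₁)
          = succCount 0 (h.take l₁) := by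
        intro x
        by_cases hl : h.length < l₁
        · rw [List.take_of_length_le (l := h ++ _) (by simp; omega),
            List.take_of_length_le (l := h) (by omega), succCount_append]
          simp
        · rw [List.take_append_of_le_length (by omega)]
      have e1 : succCount 1 (h ++ [((1:Fin 2), true)]) = succCount 1 h + 1 := by
        rw [succCount_append]; simp
      have e2 : succCount 1 (h ++ [((1:Fin 2), false)]) = succCount 1 h := by
        rw [succCount_append]; simp
      have i1 := ih (h ++ [((1:Fin 2), true)]) (by simp; omega)
      have i2 := ih (h ++ [((1:Fin 2), false)]) (by simp; omega)
      rw [e0, e1] at i1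
      rw [e0, e2] at i2
      rw [Wv, hpol]
      have hs := Vv_sat (p0 := β 0) (q₂ := q₂) (m := l₂ - l₁) h00 h01 h10 h11 ha k
        (succCount 1 h)
      have hb1 := (hβ 1).1.le
      have hb1' := (hβ 1).2
      nlinarith [mul_le_mul_of_nonneg_left i1 hb1,
        mul_le_mul_of_nonneg_left i2 (by linarith : (0:ℝ) ≤ 1 - β 1)]
    · by_cases hk : k + 1 ≤ l₂ - l₁
      · rw [Vv_low ha hk]
        exact Wv_nonneg β hβ _ _ (fun h' => by simp only [gf]; split <;> norm_num) _ _
      · -- phase 1 and user 0 unsatisfied: edf serves 0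
        have hl : h.length < l₁ := by omega
        have htk : h.take l₁ = h := List.take_of_length_le (by omega)
        have ha' : succCount 0 h < q₁ := by rw [← htk]; omega
        have hpol : edf q₁ h = 0 := by rw [edf]; simp [ha']
        have et : ∀ y : Fin 2 × Bool, (h ++ [y]).take l₁ = h ++ [y] :=
          fun y => List.take_of_length_le (by simp; omega)
        have e1 : succCount 0 ((h ++ [((0:Fin 2), true)]).take l₁)
            = succCount 0 (h.take l₁) + 1 := by
          rw [et, succCount_append, htk]; simp
        have e2 : succCount 0 ((h ++ [((0:Fin 2), false)]).take l₁)
            = succCount 0 (h.take l₁) := by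
          rw [et, succCount_append, htk]; simp
        have e3 : ∀ x, succCount 1 (h ++ [((0:Fin 2), x)]) = succCount 1 h := by
          intro x; rw [succCount_append]; simp
        have i1 := ih (h ++ [((0:Fin 2), true)]) (by simp; omega)
        have i2 := ih (h ++ [((0:Fin 2), false)]) (by simp; omega)
        rw [e1, e3] at i1
        rw [e2, e3] at i2
        rw [Wv, hpol]
        have hrec := Vv_rec (p0 := β 0) (p1 := β 1) (q₁ := q₁) (q₂ := q₂) ha
          (by omega : l₂ - l₁ < k + 1) (succCount 1 h)
        have hb0 := (hβ 0).1.le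
        have hb0' := (hβ 0).2
        nlinarith [mul_le_mul_of_nonneg_left i1 hb0,
          mul_le_mul_of_nonneg_left i2 (by linarith : (0:ℝ) ≤ 1 - β 0)]

end Main




section Measure

variable {Ω : Type*} [MeasurableSpace Ω] (μ : Measure Ω) [IsProbabilityMeasure μ]
    (β : Fin 2 → ℝ) (hβ : ∀ i, 0 < β i ∧ β i ≤ 1)
    (Y : ℕ × Fin 2 → Ω → Bool) (hmeas : ∀ p, Measurable (Y p))
    (hindep : iIndepFun Y μ)
    (hY : ∀ t i, μ {ω | Y (t, i) ω = true} = ENNReal.ofReal (β i))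

include hβ hmeas hindep hY

lemma meas_pt (p : ℕ × Fin 2) (c : Bool) :
    μ (Y p ⁻¹' {c}) = ENNReal.ofReal (w (β p.2) c) := by
  obtain ⟨t, i⟩ := p
  show μ {ω | Y (t, i) ω = c} = _
  have hms : MeasurableSet {ω | Y (t, i) ω = true} :=
    hmeas (t, i) (measurableSet_singleton true)
  cases c
  · have hc : {ω | Y (t, i) ω = false} = {ω | Y (t, i) ω = true}ᶜ := by
      ext ω; simp
    have hsub : ENNReal.ofReal (1 - β i) = 1 - ENNReal.ofReal (β i) := by
      rw [ENNReal.ofReal_sub 1 (hβ i).1.le, ENNReal.ofReal_one]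
    rw [hc, measure_compl hms (measure_ne_top μ _), hY t i, measure_univ]
    simp [w, hsub]
  · simpa [w] using hY t i

lemma Es_eq (π : Pol) (s : List Bool) :
    {ω | run π (fun t i => Y (t, i) ω) s.length = ext π ([]) s}
      = ⋂ t ∈ Finset.range s.length,
          {ω | Y (t, π (ext π ([]) (s.take t))) ω = s.getD t false} := by
  ext ω
  simp only [Set.mem_iInter, Set.mem_setOf_eq, Finset.mem_range]
  constructor
  · intro hr t ht
    exact match_of_run π (fun t i => Y (t, i) ω) s hr t ht
  · intro hm
    exact run_of_match π (fun t i => Y (t, i) ω) s hm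

lemma Es_meas (π : Pol) (s : List Bool) :
    MeasurableSet {ω | run π (fun t i => Y (t, i) ω) s.length = ext π ([]) s} := by
  rw [Es_eq μ β hβ Y hmeas hindep hY π s]
  exact Finset.measurableSet_biInter _ (fun t _ => hmeas _ (measurableSet_singleton _))

lemma Es_measure (π : Pol) (s : List Bool) :
    μ {ω | run π (fun t i => Y (t, i) ω) s.length = ext π ([]) s}
      = ENNReal.ofReal (wtl β π ([]) s) := by
  classical
  rw [Es_eq μ β hβ Y hmeas hindep hY π s]
  set F : ℕ → ℕ × Fin 2 := fun t => (t, π (ext π ([]) (s.take t))) with hF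
  have hiter : (⋂ t ∈ Finset.range s.length, {ω | Y (F t) ω = s.getD t false})
      = ⋂ p ∈ (Finset.range s.length).image F, Y p ⁻¹' {s.getD p.1 false} := by
    ext ω
    simp only [Set.mem_iInter, Finset.mem_image, Finset.mem_range, Set.mem_setOf_eq,
      Set.mem_preimage, Set.mem_singleton_iff]
    constructor
    · rintro hp p ⟨t, ht, rfl⟩; exact hp t ht
    · intro hp t ht; exact hp (F t) ⟨t, ht, rfl⟩
  rw [hiter, hindep.meas_biInter (fun p _ => ⟨{s.getD p.1 false}, trivial, rfl⟩),
    Finset.prod_image (fun a _ b _ hab => by exact (by simpa [hF, Prod.ext_iff] using hab : a = b ∧ _).1)]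
  have hpt : ∀ t ∈ Finset.range s.length,
      μ (Y (F t) ⁻¹' {s.getD (F t).1 false})
        = ENNReal.ofReal (w (β (π (ext π ([]) (s.take t)))) (s.getD t false)) := by
    intro t _
    exact meas_pt μ β hβ Y hmeas hindep hY (F t) (s.getD t false)
  rw [Finset.prod_congr rfl hpt, ← ENNReal.ofReal_prod_of_nonneg
    (fun t _ => w_nonneg (hβ _).1.le (hβ _).2 _), ← wtl_prod]

lemma bridge (π : Pol) (l₁ l₂ q₁ q₂ : ℕ) (h12 : l₁ ≤ l₂) :
    μ {ω | q₁ ≤ succCount 0 (run π (fun t i => Y (t, i) ω) l₁) ∧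
           q₂ ≤ succCount 1 (run π (fun t i => Y (t, i) ω) l₂)}
      = ENNReal.ofReal (Wv β π (gf q₁ q₂ l₁) l₂ ([])) := by
  classical
  have hset1 : {ω | q₁ ≤ succCount 0 (run π (fun t i => Y (t, i) ω) l₁) ∧
      q₂ ≤ succCount 1 (run π (fun t i => Y (t, i) ω) l₂)}
      = ⋃ s ∈ (allB l₂).filter (fun s => q₁ ≤ succCount 0 ((ext π ([]) s).take l₁)
          ∧ q₂ ≤ succCount 1 (ext π ([]) s)),
        {ω | run π (fun t i => Y (t, i) ω) l₂ = ext π ([]) s} := by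
    ext ω
    simp only [Set.mem_setOf_eq, Set.mem_iUnion, Finset.mem_filter, mem_allB]
    constructor
    · rintro ⟨h1, h2⟩
      refine ⟨(run π (fun t i => Y (t, i) ω) l₂).map Prod.snd, ⟨?_, ?_, ?_⟩, ?_⟩
      · rw [List.length_map, run_length]
      · rw [run_map_snd, run_take π _ l₂ l₁ h12]; exact h1
      · rw [run_map_snd]; exact h2
      · rw [run_map_snd]
    · rintro ⟨s, ⟨hlen, hs1, hs2⟩, hr⟩
      constructor
      · rw [← run_take π _ l₂ l₁ h12, hr]; exact hs1
      · rw [hr]; exact hs2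
  have hdisj : Set.PairwiseDisjoint
      ↑((allB l₂).filter (fun s => q₁ ≤ succCount 0 ((ext π ([]) s).take l₁)
          ∧ q₂ ≤ succCount 1 (ext π ([]) s)))
      (fun s => {ω | run π (fun t i => Y (t, i) ω) l₂ = ext π ([]) s}) := by
    intro s hs s' hs' hne
    refine Set.disjoint_left.mpr (fun ω hω hω' => hne ?_)
    simp only [Set.mem_setOf_eq] at hω hω'
    have he : ext π ([]) s = ext π ([]) s' := by rw [← hω, ← hω']
    have := congrArg (List.map Prod.snd) he
    simpa [ext_map_snd] using this
  rw [hset1, measure_biUnion_finset hdisj ?_]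
  · have heach : ∀ s ∈ (allB l₂).filter (fun s => q₁ ≤ succCount 0 ((ext π ([]) s).take l₁)
        ∧ q₂ ≤ succCount 1 (ext π ([]) s)),
        μ {ω | run π (fun t i => Y (t, i) ω) l₂ = ext π ([]) s}
          = ENNReal.ofReal (wtl β π ([]) s) := by
      intro s hs
      have hlen : s.length = l₂ := mem_allB.mp (Finset.mem_filter.mp hs).1
      have := Es_measure μ β hβ Y hmeas hindep hY π s
      rwa [hlen] at this
    rw [Finset.sum_congr rfl heach,
      ← ENNReal.ofReal_sum_of_nonneg (fun s _ => wtl_nonneg β hβ π s ([]))]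
    congr 1
    rw [Finset.sum_filter, Wv_eq_sum]
    refine Finset.sum_congr rfl (fun s _ => ?_)
    simp only [gf, mul_ite, mul_one, mul_zero]
  · intro s hs
    have hlen : s.length = l₂ := mem_allB.mp (Finset.mem_filter.mp hs).1
    have := Es_meas μ β hβ Y hmeas hindep hY π s
    rwa [hlen] at this

end Measure




end Stmt7

/-- Two users, horizon `T`: user `0` needs `q₁` packets within the first `l₁` slots and
user `1` needs `q₂` packets within the first `l₂` slots, with `l₁ ≤ l₂ ≤ T`; serving in
each slot succeeds with probability `β i` for the served user `i`, independently across
slots. The earliest-deadline-first policy — serve user `0` until its demand is met, then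
user `1` — maximizes the probability that both users meet their deadlines, over all
(possibly history-dependent) policies. -/
theorem stmt_7 {Ω : Type*} [MeasurableSpace Ω] (μ : Measure Ω) [IsProbabilityMeasure μ]
    (β : Fin 2 → ℝ) (hβ : ∀ i, 0 < β i ∧ β i ≤ 1)
    (Y : ℕ × Fin 2 → Ω → Bool) (hmeas : ∀ p, Measurable (Y p))
    (hindep : iIndepFun Y μ)
    (hY : ∀ t i, μ {ω | Y (t, i) ω = true} = ENNReal.ofReal (β i))
    (T l₁ l₂ q₁ q₂ : ℕ) (h12 : l₁ ≤ l₂) (h2T : l₂ ≤ T)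
    (π : List (Fin 2 × Bool) → Fin 2) :
    μ {ω | q₁ ≤ succCount 0 (run π (fun t i => Y (t, i) ω) l₁) ∧
           q₂ ≤ succCount 1 (run π (fun t i => Y (t, i) ω) l₂)} ≤
      μ {ω | q₁ ≤ succCount 0
              (run (fun h => if succCount 0 h < q₁ then 0 else 1)
                (fun t i => Y (t, i) ω) l₁) ∧
             q₂ ≤ succCount 1
              (run (fun h => if succCount 0 h < q₁ then 0 else 1)
                (fun t i => Y (t, i) ω) l₂)} := by
  
  classical
  rw [Stmt7.bridge μ β hβ Y hmeas hindep hY π l₁ l₂ q₁ q₂ h12,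
    Stmt7.bridge μ β hβ Y hmeas hindep hY
      (fun h => if succCount 0 h < q₁ then 0 else 1) l₁ l₂ q₁ q₂ h12]
  apply ENNReal.ofReal_le_ofReal
  have hub := Stmt7.UB (q₁ := q₁) (q₂ := q₂) hβ h12 π l₂ ([]) (by simp)
  have hlb := Stmt7.LB (q₁ := q₁) (q₂ := q₂) hβ h12 l₂ ([]) (by simp)
  exact le_trans hub hlb
end
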